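/- Let X be an infinite-dimensional Banach space, x a unit vector, and T > 0, ε > 0. Then there exist a sequence (z_n) in X with each z_n in the kernel of a norming functional of x (so ‖x + z_n‖ ≥ 1 for all n in the direction of x*), ‖z_n‖ ≥ T for all n, sep((x + z_n)_{n≥1}) ≥ T, and ‖x + z_n‖ − 1 ≤ δ̄_X(T, x) + ε for all n, where δ̄_X(T,x) = sup over finite-codimensional closed subspaces X_0 of inf{‖x+z‖−1 : z ∈ X_0, ‖z‖ ≥ T}. Moreover x*((2+β)x + z_n) = 2+β for any β, where x* is a norming functional for x. -/

import Mathlib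

/-- The quantity δ̄_X(T, x): supremum over closed finite-codimensional subspaces X₀ of
inf{‖x+z‖−1 : z ∈ X₀, ‖z‖ ≥ T}. -/
noncomputable def aucModAt (X : Type*) [NormedAddCommGroup X] [NormedSpace ℝ X]
    (T : ℝ) (x : X) : ℝ :=
  ⨆ Y : {Y : Submodule ℝ X // IsClosed (Y : Set X) ∧ FiniteDimensional ℝ (X ⧸ Y)},
    ⨅ z : {z : X // z ∈ Y.val ∧ T ≤ ‖z‖}, (‖x + z.val‖ - 1)

section Aux

variable {X : Type*} [NormedAddCommGroup X] [NormedSpace ℝ X]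

lemma aux_exists_mem_norm_eq {Y : Submodule ℝ X} (hY : Y ≠ ⊥) {T : ℝ} (hT : 0 < T) :
    ∃ z, z ∈ Y ∧ ‖z‖ = T := by
  obtain ⟨y, hyY, hy0⟩ := Submodule.exists_mem_ne_zero_of_ne_bot hY
  have hny : (0:ℝ) < ‖y‖ := norm_pos_iff.2 hy0
  refine ⟨(T / ‖y‖) • y, Y.smul_mem _ hyY, ?_⟩
  rw [norm_smul, Real.norm_eq_abs, abs_of_pos (div_pos hT hny)]
  field_simp

lemma aux_ne_bot (hinf : ¬ FiniteDimensional ℝ X) {Y : Submodule ℝ X}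
    (h : FiniteDimensional ℝ (X ⧸ Y)) : Y ≠ ⊥ := by
  rintro rfl
  exact hinf ((Submodule.quotEquivOfEqBot ⊥ rfl).finiteDimensional)

lemma aux_bddBelow (x : X) (Y : Submodule ℝ X) (T : ℝ) :
    BddBelow (Set.range fun z : {z : X // z ∈ Y ∧ T ≤ ‖z‖} => (‖x + z.val‖ - 1)) := by
  refine ⟨-1, ?_⟩
  rintro r ⟨z, rfl⟩
  show -1 ≤ ‖x + z.val‖ - 1
  have := norm_nonneg (x + z.val)
  linarith

lemma aux_iInf_le_aucModAt (hinf : ¬ FiniteDimensional ℝ X) (x : X) {T : ℝ} (hT : 0 < T)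
    (Y : Submodule ℝ X) (hcl : IsClosed (Y : Set X)) (hfd : FiniteDimensional ℝ (X ⧸ Y)) :
    (⨅ z : {z : X // z ∈ Y ∧ T ≤ ‖z‖}, (‖x + z.val‖ - 1)) ≤ aucModAt X T x := by
  have hbdd : BddAbove (Set.range fun
      Y' : {Y' : Submodule ℝ X // IsClosed (Y' : Set X) ∧ FiniteDimensional ℝ (X ⧸ Y')} =>
      ⨅ z : {z : X // z ∈ Y'.val ∧ T ≤ ‖z‖}, (‖x + z.val‖ - 1)) := by
    refine ⟨‖x‖ + T - 1, ?_⟩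
    rintro r ⟨Y', rfl⟩
    show (⨅ z : {z : X // z ∈ Y'.val ∧ T ≤ ‖z‖}, (‖x + z.val‖ - 1)) ≤ ‖x‖ + T - 1
    obtain ⟨z0, hz0Y, hz0n⟩ := aux_exists_mem_norm_eq (aux_ne_bot hinf Y'.2.2) hT
    have hz0T : T ≤ ‖z0‖ := le_of_eq hz0n.symm
    have h1 : (⨅ z : {z : X // z ∈ Y'.val ∧ T ≤ ‖z‖}, (‖x + z.val‖ - 1)) ≤ ‖x + z0‖ - 1 :=
      ciInf_le (aux_bddBelow x Y'.val T) ⟨z0, hz0Y, hz0T⟩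
    have h2 : ‖x + z0‖ ≤ ‖x‖ + T := by
      calc ‖x + z0‖ ≤ ‖x‖ + ‖z0‖ := norm_add_le _ _
        _ = ‖x‖ + T := by rw [hz0n]
    linarith
  exact le_ciSup hbdd ⟨Y, hcl, hfd⟩

lemma aux_step (hinf : ¬ FiniteDimensional ℝ X) (x : X) {T ε : ℝ} (hT : 0 < T) (hε : 0 < ε)
    (xstar : StrongDual ℝ X) (s : Finset (X × StrongDual ℝ X)) :
    ∃ z : X, xstar z = 0 ∧ (∀ p ∈ s, p.2 z = 0) ∧ T ≤ ‖z‖ ∧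
      ‖x + z‖ - 1 ≤ aucModAt X T x + ε := by
  classical
  set ι := Option {p // p ∈ s} with hι
  let f : ι → StrongDual ℝ X := fun i => i.elim xstar (fun p => p.val.2)
  let g : X →L[ℝ] (ι → ℝ) := ContinuousLinearMap.pi f
  set Y : Submodule ℝ X := LinearMap.ker (g : X →ₗ[ℝ] (ι → ℝ)) with hY
  have hmem : ∀ w : X, w ∈ Y ↔ ∀ i : ι, f i w = 0 := by
    intro w
    constructor
    · intro hw i
      have : g w = 0 := hw
      have := congrFun this i
      simpa [g, ContinuousLinearMap.pi_apply] using this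
    · intro hw
      show g w = 0
      funext i
      simpa [g, ContinuousLinearMap.pi_apply] using hw i
  have hcl : IsClosed (Y : Set X) := ContinuousLinearMap.isClosed_ker g
  have hfd : FiniteDimensional ℝ (X ⧸ Y) := by
    have hker : LinearMap.ker (g : X →ₗ[ℝ] (ι → ℝ)) = Y := rfl
    have e := LinearMap.quotKerEquivRange (g : X →ₗ[ℝ] (ι → ℝ))
    rw [hker] at e
    exact e.symm.finiteDimensional
  have hYne : Y ≠ ⊥ := aux_ne_bot hinf hfd
  obtain ⟨z0, hz0Y, hz0n⟩ := aux_exists_mem_norm_eq hYne hT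
  haveI : Nonempty {z : X // z ∈ Y ∧ T ≤ ‖z‖} := ⟨⟨z0, hz0Y, le_of_eq hz0n.symm⟩⟩
  have hlt : (⨅ z : {z : X // z ∈ Y ∧ T ≤ ‖z‖}, (‖x + z.val‖ - 1)) <
      (⨅ z : {z : X // z ∈ Y ∧ T ≤ ‖z‖}, (‖x + z.val‖ - 1)) + ε :=
    lt_add_of_pos_right _ hε
  obtain ⟨⟨z, hzY, hzT⟩, hz⟩ := exists_lt_of_ciInf_lt hlt
  refine ⟨z, ?_, ?_, hzT, ?_⟩
  · exact (hmem z).1 hzY none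
  · intro p hp
    exact (hmem z).1 hzY (some ⟨p, hp⟩)
  · have := aux_iInf_le_aucModAt hinf x hT Y hcl hfd
    linarith [hz]

end Aux

/-- Construction of a well-separated sequence x + z_n in the kernel of a norming
functional of x, almost attaining δ̄_X(T,x). -/
theorem auc_separated_sequence
    (X : Type*) [NormedAddCommGroup X] [NormedSpace ℝ X] [CompleteSpace X]
    (hinf : ¬ FiniteDimensional ℝ X)
    (x : X) (hx : ‖x‖ = 1) (T ε : ℝ) (hT : 0 < T) (hε : 0 < ε) :
    ∃ xstar : StrongDual ℝ X, ‖xstar‖ = 1 ∧ xstar x = 1 ∧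
      ∃ z : ℕ → X,
        (∀ n, xstar (z n) = 0) ∧
        (∀ n, 1 ≤ ‖x + z n‖) ∧
        (∀ n, T ≤ ‖z n‖) ∧
        (∀ n m, n ≠ m → T ≤ ‖(x + z n) - (x + z m)‖) ∧
        (∀ n, ‖x + z n‖ - 1 ≤ aucModAt X T x + ε) ∧
        (∀ β : ℝ, ∀ n, xstar ((2 + β) • x + z n) = 2 + β) := by
  have hx0 : x ≠ 0 := by
    intro h; rw [h, norm_zero] at hx; linarith
  obtain ⟨xstar, hxs1, hxsx⟩ := exists_dual_vector ℝ x (norm_ne_zero_iff.mpr hx0)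
  have hxsx1 : xstar x = 1 := by rw [hxsx, hx]; norm_num
  refine ⟨xstar, hxs1, hxsx1, ?_⟩
  set P : X × StrongDual ℝ X → Prop := fun p =>
    xstar p.1 = 0 ∧ T ≤ ‖p.1‖ ∧ ‖x + p.1‖ - 1 ≤ aucModAt X T x + ε ∧
      ‖p.2‖ = 1 ∧ p.2 p.1 = ‖p.1‖ with hP
  set r : X × StrongDual ℝ X → X × StrongDual ℝ X → Prop := fun p q =>
    p.2 q.1 = 0 with hr
  have hstep : ∀ s : Finset (X × StrongDual ℝ X), (∀ p ∈ s, P p) →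
      ∃ y, P y ∧ ∀ p ∈ s, r p y := by
    intro s _
    obtain ⟨w, hw1, hw2, hw3, hw4⟩ := aux_step hinf x hT hε xstar s
    have hw0 : w ≠ 0 := by
      intro h; rw [h, norm_zero] at hw3; linarith
    obtain ⟨wstar, hws1, hwsw⟩ := exists_dual_vector ℝ w (norm_ne_zero_iff.mpr hw0)
    refine ⟨(w, wstar), ⟨hw1, hw3, hw4, hws1, by simpa using hwsw⟩, ?_⟩
    intro p hp
    exact hw2 p hp
  obtain ⟨f, hfP, hfr⟩ := exists_seq_of_forall_finset_exists P r hstep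
  refine ⟨fun n => (f n).1, fun n => (hfP n).1, ?_, fun n => (hfP n).2.1, ?_,
    fun n => (hfP n).2.2.1, ?_⟩
  · -- 1 ≤ ‖x + z n‖
    intro n
    have h1 : xstar (x + (f n).1) = 1 := by
      rw [map_add, hxsx1, (hfP n).1, add_zero]
    calc (1:ℝ) = ‖xstar (x + (f n).1)‖ := by rw [h1]; norm_num
      _ ≤ ‖xstar‖ * ‖x + (f n).1‖ := xstar.le_opNorm _
      _ = ‖x + (f n).1‖ := by rw [hxs1, one_mul]
  · -- separation
    have key : ∀ n m, n < m → T ≤ ‖(f n).1 - (f m).1‖ := by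
      intro n m hnm
      have hr0 : (f n).2 ((f m).1) = 0 := hfr n m hnm
      have heq : (f n).2 ((f n).1 - (f m).1) = ‖(f n).1‖ := by
        rw [map_sub, hr0, sub_zero, (hfP n).2.2.2.2]
      calc T ≤ ‖(f n).1‖ := (hfP n).2.1
        _ = ‖(f n).2 ((f n).1 - (f m).1)‖ := by rw [heq]; exact (norm_norm _).symm
        _ ≤ ‖(f n).2‖ * ‖(f n).1 - (f m).1‖ := (f n).2.le_opNorm _
        _ = ‖(f n).1 - (f m).1‖ := by rw [(hfP n).2.2.2.1, one_mul]
    intro n m hnm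
    have hsimp : (x + (f n).1) - (x + (f m).1) = (f n).1 - (f m).1 := by abel
    rw [hsimp]
    rcases lt_or_gt_of_ne hnm with h | h
    · exact key n m h
    · rw [norm_sub_rev]; exact key m n h
  · -- functional identity
    intro β n
    rw [map_add, map_smul, (hfP n).1, hxsx1, add_zero, smul_eq_mul, mul_one]
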